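/- Let G be a graph whose vertex set is partitioned into sets W₁, …, W_{m} each of size at most q, such that every edge of G joins vertices in W_i and W_j with |i − j| ≤ 1 (indices cyclically, i.e., also allowing {i,j} = {1,m}). Then the bandwidth of G is at most 3q. -/

import Mathlib

open SimpleGraph Finset

/-- If the vertex set of `G` is partitioned into layers `W 0, …, W (m-1)`,
each of size at most `q`, and every edge of `G` joins two cyclically consecutive layers
(`|i - j| ≤ 1`, also allowing the pair of the first and last layers), then the bandwidth
of `G` is at most `3q`: there is a linear layout in which the endpoints of every edge are
at distance at most `3q`. -/
theorem bandwidth_le_of_cyclic_layering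
    {V : Type*} [Fintype V] (G : SimpleGraph V) (m q : ℕ) (hm : 1 ≤ m)
    (W : Fin m → Set V)
    (hpart : ∀ v : V, ∃! i, v ∈ W i)
    (hsize : ∀ i, (W i).ncard ≤ q)
    (hedge : ∀ u v : V, G.Adj u v → ∃ i j, u ∈ W i ∧ v ∈ W j ∧
        ((i : ℕ) ≤ (j : ℕ) + 1 ∧ (j : ℕ) ≤ (i : ℕ) + 1 ∨
         ((i : ℕ) = 0 ∧ (j : ℕ) = m - 1) ∨ ((j : ℕ) = 0 ∧ (i : ℕ) = m - 1))) :
    ∃ π : V ≃ Fin (Fintype.card V),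
      ∀ u v : V, G.Adj u v → Nat.dist (π u : ℕ) (π v : ℕ) ≤ 3 * q := by
  classical
  -- the layer of each vertex
  have hLex : ∃ L : V → Fin m, ∀ v, v ∈ W (L v) ∧ ∀ j, v ∈ W j → j = L v :=
    ⟨fun v => (hpart v).choose, fun v =>
      ⟨(hpart v).choose_spec.1, fun j hj => (hpart v).choose_spec.2 j hj⟩⟩
  obtain ⟨L, hL⟩ := hLex
  -- interleaving permutation of layer indices
  set s : ℕ → ℕ := fun i => if 2*i < m then 2*i else 2*(m-1-i)+1 with hs
  have hsinj : ∀ i j : ℕ, i < m → j < m → s i = s j → i = j := by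
    intro i j hi hj h
    simp only [hs] at h
    split_ifs at h <;> omega
  have hsdist : ∀ i j : ℕ, i < m → j < m →
      (i ≤ j + 1 ∧ j ≤ i + 1 ∨ (i = 0 ∧ j = m-1) ∨ (j = 0 ∧ i = m-1)) →
      s i ≤ s j + 2 ∧ s j ≤ s i + 2 := by
    intro i j hi hj h
    simp only [hs]
    split_ifs <;> omega
  set f : V → ℕ := fun v => s (L v) with hf
  -- a linear order on V sorting by `f`, with arbitrary tie-break
  let e := Fintype.equivFin V
  let g : V → ℕ ×ₗ ℕ := fun v => toLex (f v, (e v : ℕ))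
  have hginj : Function.Injective g := by
    intro a b hab
    have h2 : ((f a, (e a : ℕ)) : ℕ × ℕ) = (f b, (e b : ℕ)) := hab
    have : (e a : ℕ) = (e b : ℕ) := congrArg Prod.snd h2
    exact e.injective (Fin.val_injective this)
  letI : LinearOrder V := LinearOrder.lift' g hginj
  have hle : ∀ a b : V, a ≤ b ↔ (f a < f b ∨ (f a = f b ∧ (e a : ℕ) ≤ (e b : ℕ))) := by
    intro a b
    exact Prod.Lex.le_iff (x := g a) (y := g b)
  have hfo : ∀ a b : V, a ≤ b → f a ≤ f b := by
    intro a b h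
    rcases (hle a b).1 h with h' | ⟨h', _⟩
    · exact h'.le
    · exact h'.le
  let π : V ≃o Fin (Fintype.card V) := (monoEquivOfFin V rfl).symm
  refine ⟨π.toEquiv, ?_⟩
  -- blocks have size at most q
  have hblock : ∀ k : ℕ, (Finset.univ.filter (fun w : V => f w = k)).card ≤ q := by
    intro k
    rcases (Finset.univ.filter (fun w : V => f w = k)).eq_empty_or_nonempty with h | ⟨w0, hw0⟩
    · simp [h]
    · have hw0' : f w0 = k := (Finset.mem_filter.1 hw0).2
      have hsub : (Finset.univ.filter (fun w : V => f w = k)) ⊆ (W (L w0)).toFinset := by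
        intro w hw
        have hwk : f w = k := (Finset.mem_filter.1 hw).2
        have : s (L w) = s (L w0) := by show f w = f w0; rw [hwk, hw0']
        have hLw : (L w : ℕ) = (L w0 : ℕ) :=
          hsinj _ _ (L w).isLt (L w0).isLt this
        have : L w = L w0 := Fin.ext hLw
        rw [Set.mem_toFinset, ← this]
        exact (hL w).1
      calc (Finset.univ.filter (fun w : V => f w = k)).card
          ≤ (W (L w0)).toFinset.card := Finset.card_le_card hsub
        _ = (W (L w0)).ncard := (Set.ncard_eq_toFinset_card' _).symm
        _ ≤ q := hsize _
  -- key counting step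
  have key : ∀ u v : V, (π u : ℕ) ≤ (π v : ℕ) → f v ≤ f u + 2 →
      (π v : ℕ) + 1 ≤ (π u : ℕ) + 3 * q := by
    intro u v hπ hfv
    have huv : u ≤ v := π.le_iff_le.1 (by exact_mod_cast hπ)
    have hfu : f u ≤ f v := hfo u v huv
    set T : Finset V := Finset.univ.filter (fun w => f u ≤ f w ∧ f w ≤ f v) with hT
    have hcard1 : (π v : ℕ) + 1 - (π u : ℕ) ≤ T.card := by
      have hmap : ∀ k ∈ Finset.Icc (π u) (π v), π.symm k ∈ T := by
        intro k hk
        obtain ⟨hk1, hk2⟩ := Finset.mem_Icc.1 hk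
        have h1 : u ≤ π.symm k := by
          have := π.symm.le_iff_le.2 hk1
          simpa using this
        have h2 : π.symm k ≤ v := by
          have := π.symm.le_iff_le.2 hk2
          simpa using this
        exact Finset.mem_filter.2 ⟨Finset.mem_univ _, hfo _ _ h1, hfo _ _ h2⟩
      have hinj : Set.InjOn (fun k => π.symm k) (Finset.Icc (π u) (π v)) := by
        intro a _ b _ hab
        exact π.symm.injective hab
      have := Finset.card_le_card_of_injOn _ hmap hinj
      rwa [Fin.card_Icc] at this
    have hcard2 : T.card ≤ 3 * q := by
      have hsub : T ⊆ (Finset.Icc (f u) (f v)).biUnion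
          (fun k => Finset.univ.filter (fun w : V => f w = k)) := by
        intro w hw
        obtain ⟨-, h1, h2⟩ := Finset.mem_filter.1 hw
        exact Finset.mem_biUnion.2 ⟨f w, Finset.mem_Icc.2 ⟨h1, h2⟩,
          Finset.mem_filter.2 ⟨Finset.mem_univ _, rfl⟩⟩
      calc T.card ≤ ((Finset.Icc (f u) (f v)).biUnion
              (fun k => Finset.univ.filter (fun w : V => f w = k))).card :=
            Finset.card_le_card hsub
        _ ≤ ∑ k ∈ Finset.Icc (f u) (f v),
              (Finset.univ.filter (fun w : V => f w = k)).card :=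
            Finset.card_biUnion_le
        _ ≤ ∑ _k ∈ Finset.Icc (f u) (f v), q :=
            Finset.sum_le_sum (fun k _ => hblock k)
        _ = (Finset.Icc (f u) (f v)).card * q := by rw [Finset.sum_const, smul_eq_mul]
        _ ≤ 3 * q := by
            apply Nat.mul_le_mul_right
            rw [Nat.card_Icc]
            omega
    omega
  intro u v huv
  obtain ⟨i, j, hu, hv, hij⟩ := hedge u v huv
  have hiu : i = L u := (hL u).2 i hu
  have hjv : j = L v := (hL v).2 j hv
  have hd := hsdist (L u : ℕ) (L v : ℕ) (L u).isLt (L v).isLt (by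
    rw [hiu, hjv] at hij; exact hij)
  have hfu : f u = s (L u) := rfl
  have hfv : f v = s (L v) := rfl
  show Nat.dist (π u : ℕ) (π v : ℕ) ≤ 3 * q
  rcases le_total ((π u : ℕ)) ((π v : ℕ)) with h | h
  · have := key u v h (by rw [hfu, hfv]; exact hd.2)
    have hdist : Nat.dist (π u : ℕ) (π v : ℕ) = (π v : ℕ) - (π u : ℕ) :=
      Nat.dist_eq_sub_of_le h
    omega
  · have := key v u h (by rw [hfu, hfv]; exact hd.1)
    have hdist : Nat.dist (π u : ℕ) (π v : ℕ) = (π u : ℕ) - (π v : ℕ) := by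
      rw [Nat.dist_comm]; exact Nat.dist_eq_sub_of_le h
    omega
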